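/- arXiv:1201.2502 — 2 statements merged into one kernel-verified Lean document; each statement's English description precedes it below -/
import Mathlib

section
/- For every integer n ≥ 1, Σ^{2^{n−1}}_n = −2^{(n−1)(n−2)/2} (equivalently, a(n, 2^{n−1}) = 2^{(n−1)(n−2)/2}, where a(n,l) := −Σ^l_n). -/
/-- The ±1 Thue–Morse sequence: `u n = (-1)^(s₂(n)+1)` where `s₂` is the binary digit sum. -/
def u (n : ℕ) : ℤ := (-1) ^ ((Nat.digits 2 n).sum + 1)

/-- The "Pascal triangle" associated to the Thue–Morse sequence:
`Sig k n` is `Σ^k_n` (k the superscript, n the subscript). -/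
def Sig : ℕ → ℕ → ℤ
  | k, 0 => u k
  | 0, _ + 1 => 0
  | k + 1, n + 1 => Sig k n + Sig k (n + 1)

open Polynomial Finset

lemma u_two_mul (k : ℕ) : u (2 * k) = u k := by
  rcases Nat.eq_zero_or_pos k with rfl | hk
  · rfl
  · unfold u
    rw [Nat.digits_def' (by norm_num) (by omega)]
    simp [Nat.mul_div_cancel_left _ (by norm_num : 0 < 2), Nat.mul_mod_right]

lemma u_two_mul_add_one (k : ℕ) : u (2 * k + 1) = -u k := by
  unfold u
  rw [Nat.digits_def' (by norm_num) (by omega)]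
  have h1 : (2 * k + 1) % 2 = 1 := by omega
  have h2 : (2 * k + 1) / 2 = k := by omega
  rw [h1, h2]
  simp [pow_succ, pow_add]

lemma sum_range_two_mul {M : Type*} [AddCommMonoid M] (f : ℕ → M) (N : ℕ) :
    ∑ j ∈ range (2 * N), f j = ∑ i ∈ range N, (f (2 * i) + f (2 * i + 1)) := by
  induction N with
  | zero => simp
  | succ N ih =>
    have : 2 * (N + 1) = (2 * N + 1) + 1 := by ring
    rw [this, Finset.sum_range_succ, Finset.sum_range_succ, ih, Finset.sum_range_succ]
    abel

lemma sig_eq_sum (k : ℕ) : ∀ m : ℕ,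
    Sig k (m + 1) = ∑ j ∈ range k, u j * ((k - 1 - j).choose m : ℤ) := by
  induction k with
  | zero => intro m; simp [Sig]
  | succ k ih =>
    intro m
    have hstep : Sig (k + 1) (m + 1) = Sig k m + Sig k (m + 1) := rfl
    cases m with
    | zero =>
      rw [hstep, Finset.sum_range_succ]
      have : Sig k 0 = u k := by cases k <;> rfl
      rw [this, ih 0]
      simp only [Nat.choose_zero_right, Nat.cast_one, mul_one]
      rw [add_comm]
    | succ m =>
      rw [hstep, ih m, ih (m + 1), Finset.sum_range_succ, ← Finset.sum_add_distrib]
      have hz : k + 1 - 1 - k = 0 := by omega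
      rw [hz, Nat.choose_eq_zero_of_lt (by omega : 0 < m + 1)]
      push_cast
      rw [mul_zero, add_zero]
      apply Finset.sum_congr rfl
      intro j hj
      rw [Finset.mem_range] at hj
      have h1 : k - 1 - j + 1 = k - j := by omega
      rw [← mul_add]
      congr 1
      rw [← h1]
      push_cast [Nat.choose_succ_succ]
      ring

lemma taylor_pow' (r : ℤ) (p : ℤ[X]) (a : ℕ) :
    Polynomial.taylor r (p ^ a) = (Polynomial.taylor r p) ^ a := by
  induction a with
  | zero => simp [Polynomial.taylor_one]
  | succ a ih => rw [pow_succ, Polynomial.taylor_mul, ih, pow_succ]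

lemma lemA (m : ℕ) :
    (∑ j ∈ range (2 ^ m), Polynomial.C (u j) * (Polynomial.X : ℤ[X]) ^ (2 ^ m - 1 - j)) =
      (-1) ^ (m + 1) * ∏ t ∈ range m, (1 - (Polynomial.X : ℤ[X]) ^ (2 ^ t)) := by
  induction m with
  | zero =>
    simp [u]
  | succ m ih =>
    have h2 : 2 ^ (m + 1) = 2 * 2 ^ m := by rw [pow_succ]; ring
    rw [h2, sum_range_two_mul]
    have key : ∀ i ∈ range (2 ^ m),
        (Polynomial.C (u (2 * i)) * (Polynomial.X : ℤ[X]) ^ (2 * 2 ^ m - 1 - (2 * i)) +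
          Polynomial.C (u (2 * i + 1)) * (Polynomial.X : ℤ[X]) ^ (2 * 2 ^ m - 1 - (2 * i + 1))) =
        (Polynomial.X - 1) * (Polynomial.C (u i) * ((Polynomial.X : ℤ[X]) ^ 2) ^ (2 ^ m - 1 - i)) := by
      intro i hi
      rw [Finset.mem_range] at hi
      have e1 : 2 * 2 ^ m - 1 - 2 * i = 2 * (2 ^ m - 1 - i) + 1 := by omega
      have e2 : 2 * 2 ^ m - 1 - (2 * i + 1) = 2 * (2 ^ m - 1 - i) := by omega
      rw [e1, e2, u_two_mul, u_two_mul_add_one, map_neg]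
      ring
    rw [Finset.sum_congr rfl key, ← Finset.mul_sum]
    have ihc := congrArg (Polynomial.aeval ((Polynomial.X : ℤ[X]) ^ 2)) ih
    simp only [map_sum, map_mul, map_pow, map_sub, map_one, map_neg, map_prod,
      Polynomial.aeval_C, Polynomial.aeval_X, Polynomial.algebraMap_eq] at ihc
    rw [ihc]
    rw [Finset.prod_range_succ']
    have hcomp : ∀ t : ℕ, ((Polynomial.X : ℤ[X]) ^ 2) ^ 2 ^ t = Polynomial.X ^ 2 ^ (t + 1) := by
      intro t
      rw [← pow_mul, pow_succ]
      ring_nf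
    simp only [hcomp]
    ring

lemma taylor_term (c : ℤ) (a m : ℕ) :
    ((Polynomial.taylor (1 : ℤ)) (Polynomial.C c * Polynomial.X ^ a)).coeff m =
      c * (a.choose m : ℤ) := by
  rw [Polynomial.taylor_mul, Polynomial.taylor_C, taylor_pow', Polynomial.taylor_X,
    Polynomial.coeff_C_mul]
  simp [Polynomial.coeff_X_add_one_pow]

lemma sig_pow (m : ℕ) : Sig (2 ^ m) (m + 1) = -(2 ^ (m * (m - 1) / 2)) := by
  rw [sig_eq_sum]
  have key := congrArg (fun p : ℤ[X] => ((Polynomial.taylor (1 : ℤ)) p).coeff m) (lemA m)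
  simp only [map_sum, Polynomial.finset_sum_coeff, taylor_term] at key
  rw [key]
  -- now compute the right-hand side
  have hfac : ∀ t ∈ range m,
      (1 - (Polynomial.X : ℤ[X]) ^ (2 ^ t)) =
        (1 - Polynomial.X) * ∑ i ∈ range (2 ^ t), Polynomial.X ^ i := by
    intro t _
    linear_combination geom_sum_mul (Polynomial.X : ℤ[X]) (2 ^ t)
  rw [Finset.prod_congr rfl hfac, Finset.prod_mul_distrib, Finset.prod_const,
    Finset.card_range]
  have hneg : ((-1 : ℤ[X]) ^ (m + 1)) = Polynomial.C ((-1 : ℤ) ^ (m + 1)) := by simp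
  rw [hneg, Polynomial.taylor_mul, Polynomial.taylor_C, Polynomial.taylor_mul, taylor_pow']
  have ht1 : (Polynomial.taylor (1 : ℤ)) (1 - Polynomial.X) = -Polynomial.X := by
    rw [map_sub, Polynomial.taylor_one, Polynomial.taylor_X]
    simp
  rw [ht1]
  set G := (Polynomial.taylor (1 : ℤ)) (∏ t ∈ range m, ∑ i ∈ range (2 ^ t), (Polynomial.X : ℤ[X]) ^ i)
    with hG
  have hrearr : Polynomial.C ((-1 : ℤ) ^ (m + 1)) * ((-Polynomial.X) ^ m * G) =
      Polynomial.C ((-1 : ℤ) ^ (m + 1) * (-1 : ℤ) ^ m) * (Polynomial.X ^ m * G) := by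
    rw [map_mul]
    have : ((-Polynomial.X : ℤ[X])) ^ m = Polynomial.C ((-1 : ℤ) ^ m) * Polynomial.X ^ m := by
      rw [neg_pow]
      simp
    rw [this]
    ring
  rw [hrearr]
  have hodd : (-1 : ℤ) ^ (m + 1) * (-1 : ℤ) ^ m = -1 := by
    rw [← pow_add]
    exact Odd.neg_one_pow ⟨m, by ring⟩
  rw [hodd, Polynomial.coeff_C_mul]
  have hcm : (Polynomial.X ^ m * G).coeff m = G.coeff 0 := by
    simpa using Polynomial.coeff_X_pow_mul G m 0
  rw [hcm, hG, Polynomial.taylor_coeff_zero, Polynomial.eval_prod]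
  have heval : ∀ t ∈ range m,
      Polynomial.eval (1 : ℤ) (∑ i ∈ range (2 ^ t), (Polynomial.X : ℤ[X]) ^ i) = 2 ^ t := by
    intro t _
    rw [Polynomial.eval_finset_sum]
    simp
  rw [Finset.prod_congr rfl heval, Finset.prod_pow_eq_pow_sum, Finset.sum_range_id]
  ring

theorem sig_midpoint_value (n : ℕ) (hn : 1 ≤ n) :
    Sig (2 ^ (n - 1)) n = -(2 ^ ((n - 1) * (n - 2) / 2)) := by
  obtain ⟨m, rfl⟩ : ∃ m, n = m + 1 := ⟨n - 1, by omega⟩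
  have h1 : m + 1 - 1 = m := rfl
  have h2 : m + 1 - 2 = m - 1 := by omega
  rw [h1, h2]
  exact sig_pow m
end

section
/- For every integer n ≥ 1 and every integer l with 0 ≤ l ≤ 2^n − 1, one has 0 ≤ −Σ^l_n ≤ 2^{(n−1)(n−2)/2} (equivalently, 0 ≤ a(n,l) ≤ 2^{(n−1)(n−2)/2}, where a(n,l) := −Σ^l_n). -/
lemma u_even (t : ℕ) : u (2 * t) = u t := by
  rcases Nat.eq_zero_or_pos t with h | h
  · subst h; rfl
  · unfold u
    rw [Nat.digits_def' (by norm_num) (by omega : 0 < 2 * t)]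
    simp [Nat.mul_div_cancel_left t (by norm_num : 0 < 2), Nat.mul_mod_right]

lemma u_odd (t : ℕ) : u (2 * t + 1) = -u t := by
  unfold u
  rw [Nat.digits_def' (by norm_num) (by omega : 0 < 2 * t + 1)]
  have h1 : (2 * t + 1) % 2 = 1 := by omega
  have h2 : (2 * t + 1) / 2 = t := by omega
  rw [h1, h2]
  simp only [List.sum_cons]
  have : 1 + (Nat.digits 2 t).sum + 1 = ((Nat.digits 2 t).sum + 1) + 1 := by omega
  rw [this, pow_succ]
  ring

/-- Iterated partial sums of `u`. -/
def f : ℕ → ℕ → ℤ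
  | 0, k => u k
  | n + 1, k => ∑ j ∈ Finset.range k, f n j

@[simp] lemma f_zero (k : ℕ) : f 0 k = u k := rfl

lemma f_succ_def (n k : ℕ) : f (n + 1) k = ∑ j ∈ Finset.range k, f n j := rfl

@[simp] lemma f_succ_zero (n : ℕ) : f (n + 1) 0 = 0 := by simp [f_succ_def]

lemma f_succ (n k : ℕ) : f (n + 1) (k + 1) = f (n + 1) k + f n k := by
  rw [f_succ_def, f_succ_def, Finset.sum_range_succ]

lemma f_eq_zero_of_lt : ∀ n k, k < n → f n k = 0 := by
  intro n
  induction n with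
  | zero => intro k h; omega
  | succ n ih =>
      intro k h
      rw [f_succ_def]
      refine Finset.sum_eq_zero fun j hj => ?_
      exact ih j (by simp at hj; omega)

lemma Sig_eq_f : ∀ k n, Sig k n = f n k := by
  intro k
  induction k with
  | zero =>
      intro n
      cases n with
      | zero => rfl
      | succ n => simp [Sig]
  | succ k ih =>
      intro n
      cases n with
      | zero => rfl
      | succ n => rw [Sig, ih n, ih (n + 1), f_succ]; ring

/-- The coefficients of the halving identity. -/
def c (r K m : ℕ) : ℤ :=
  if 2 * m + 1 ≤ K then (r.choose (K - (2 * m + 1)) : ℤ) else 0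

lemma c_nonneg (r K m : ℕ) : 0 ≤ c r K m := by
  unfold c; split <;> positivity

lemma c_pascal (r K m : ℕ) : c (r + 1) (K + 1) m = c r K m + c r (K + 1) m := by
  unfold c
  by_cases h : 2 * m + 1 ≤ K
  · rw [if_pos (by omega), if_pos h, if_pos (by omega)]
    have he : K + 1 - (2 * m + 1) = (K - (2 * m + 1)) + 1 := by omega
    rw [he, Nat.choose_succ_succ]
    push_cast; ring
  · by_cases h2 : 2 * m + 1 ≤ K + 1
    · rw [if_pos h2, if_neg h, if_pos h2]
      have he : K + 1 - (2 * m + 1) = 0 := by omega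
      rw [he]; simp
    · rw [if_neg h2, if_neg h, if_neg h2]; ring

lemma c_shift (r K m : ℕ) : c r (K + 2) (m + 1) = c r K m := by
  unfold c
  have he : K + 2 - (2 * (m + 1) + 1) = K - (2 * m + 1) := by omega
  rw [he]
  exact if_congr (by omega) rfl rfl

lemma c_zero_eq (K m : ℕ) : c 0 K m = if K = 2 * m + 1 then 1 else 0 := by
  unfold c
  by_cases h : K = 2 * m + 1
  · rw [if_pos (by omega), if_pos h]
    simp [h]
  · by_cases h2 : 2 * m + 1 ≤ K
    · rw [if_pos h2, if_neg h]
      have : ∃ j, K - (2 * m + 1) = j + 1 := ⟨K - (2 * m + 1) - 1, by omega⟩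
      obtain ⟨j, hj⟩ := this
      rw [hj]
      simp
    · rw [if_neg h2, if_neg h]

lemma f_one (k : ℕ) : f 1 k = if k % 2 = 1 then u (k / 2) else 0 := by
  induction k with
  | zero => simp
  | succ k ih =>
      rw [f_succ, ih, f_zero]
      rcases Nat.even_or_odd k with ⟨t, ht⟩ | ⟨t, ht⟩
      · have hk : k = 2 * t := by omega
        subst hk
        rw [u_even]
        rw [if_neg (by omega), if_pos (by omega)]
        have : (2 * t + 1) / 2 = t := by omega
        rw [this]; ring
      · have hk : k = 2 * t + 1 := by omega
        subst hk
        rw [u_odd]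
        rw [if_pos (by omega), if_neg (by omega)]
        have : (2 * t + 1) / 2 = t := by omega
        rw [this]; ring

/-- The halving identity: `f (r+1)` in terms of binomial combinations of `f r`. -/
lemma f_eq_phi : ∀ r k, f (r + 1) k = ∑ m ∈ Finset.range k, c r (k + r) m * f r m := by
  intro r
  induction r with
  | zero =>
      intro k
      rw [f_one]
      rcases Nat.even_or_odd k with ⟨t, ht⟩ | ⟨t, ht⟩
      · have hk : k = 2 * t := by omega
        subst hk
        rw [if_neg (by omega)]
        refine (Finset.sum_eq_zero fun m hm => ?_).symm
        rw [f_zero, c_zero_eq, if_neg (by omega)]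
        ring
      · have hk : k = 2 * t + 1 := by omega
        subst hk
        rw [if_pos (by omega)]
        have hd : (2 * t + 1) / 2 = t := by omega
        rw [hd]
        rw [Finset.sum_eq_single t]
        · rw [f_zero, c_zero_eq, if_pos (by omega)]; ring
        · intro b _ hb
          rw [f_zero, c_zero_eq, if_neg (by omega)]; ring
        · intro h
          exact absurd (Finset.mem_range.mpr (by omega)) h
  | succ r ih =>
      intro k
      induction k with
      | zero => simp
      | succ k ih2 =>
          rw [f_succ, ih2, ih k]
          have hR : ∀ m, c (r + 1) (k + 1 + (r + 1)) m * f (r + 1) m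
              = c r (k + r + 1) m * f (r + 1) m + c r (k + r + 2) m * f (r + 1) m := by
            intro m
            have : k + 1 + (r + 1) = (k + r + 1) + 1 := by omega
            rw [this, c_pascal]
            ring
          rw [Finset.sum_congr rfl fun m _ => hR m, Finset.sum_add_distrib]
          -- second sum: shift index
          have h2 : ∑ m ∈ Finset.range (k + 1), c r (k + r + 2) m * f (r + 1) m
              = ∑ m ∈ Finset.range k, c r (k + r) m * (f (r + 1) m + f r m) := by
            rw [Finset.sum_range_succ']
            simp only [f_succ_zero, mul_zero, add_zero]
            refine Finset.sum_congr rfl fun m _ => ?_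
            have : k + r + 2 = (k + r) + 2 := by omega
            rw [this, c_shift, f_succ]
          rw [h2]
          -- first sum: peel last term, which vanishes
          have h1 : ∑ m ∈ Finset.range (k + 1), c r (k + r + 1) m * f (r + 1) m
              = ∑ m ∈ Finset.range k, c r (k + r + 1) m * f (r + 1) m := by
            rw [Finset.sum_range_succ]
            have : c r (k + r + 1) k * f (r + 1) k = 0 := by
              by_cases h : 2 * k + 1 ≤ k + r + 1
              · rw [f_eq_zero_of_lt (r + 1) k (by omega)]; ring
              · unfold c; rw [if_neg h]; ring
            rw [this, add_zero]
          rw [h1]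
          have h3 : ∀ m, c (r + 1) (k + (r + 1)) m * f (r + 1) m
              = c r (k + r) m * f (r + 1) m + c r (k + r + 1) m * f (r + 1) m := by
            intro m
            have : k + (r + 1) = (k + r) + 1 := by omega
            rw [this, c_pascal]
            ring
          rw [Finset.sum_congr rfl fun m _ => h3 m, Finset.sum_add_distrib]
          have h4 : ∑ m ∈ Finset.range k, c r (k + r) m * (f (r + 1) m + f r m)
              = ∑ m ∈ Finset.range k, c r (k + r) m * f (r + 1) m
                + ∑ m ∈ Finset.range k, c r (k + r) m * f r m := by
            rw [← Finset.sum_add_distrib]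
            exact Finset.sum_congr rfl fun m _ => by ring
          rw [h4]
          ring

/-- Sum of every-other binomial coefficients equals `2 ^ r`. -/
lemma choose_parity_sum (r p : ℕ) :
    ∑ e ∈ (Finset.range (r + 2)).filter (fun e => e % 2 = p % 2),
      ((r + 1).choose e : ℤ) = 2 ^ r := by
  have htot : ∑ e ∈ (Finset.range (r + 2)).filter (fun e => e % 2 = 0),
        ((r + 1).choose e : ℤ)
      + ∑ e ∈ (Finset.range (r + 2)).filter (fun e => ¬(e % 2 = 0)),
        ((r + 1).choose e : ℤ) = 2 ^ (r + 1) := by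
    rw [Finset.sum_filter_add_sum_filter_not]
    rw [← Nat.cast_sum]
    rw [Nat.sum_range_choose]
    push_cast; ring
  have halt : ∑ e ∈ (Finset.range (r + 2)).filter (fun e => e % 2 = 0),
        ((r + 1).choose e : ℤ)
      - ∑ e ∈ (Finset.range (r + 2)).filter (fun e => ¬(e % 2 = 0)),
        ((r + 1).choose e : ℤ) = 0 := by
    have := Int.alternating_sum_range_choose (n := r + 1)
    rw [if_neg (by omega)] at this
    rw [← this, ← Finset.sum_filter_add_sum_filter_not (Finset.range (r + 2))
      (fun e => e % 2 = 0) (fun e => (-1 : ℤ) ^ e * ((r + 1).choose e : ℤ))]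
    have he : ∀ e ∈ (Finset.range (r + 2)).filter (fun e => e % 2 = 0),
        (-1 : ℤ) ^ e * ((r + 1).choose e : ℤ) = ((r + 1).choose e : ℤ) := by
      intro e he'
      simp only [Finset.mem_filter] at he'
      rw [(Nat.even_iff.mpr he'.2).neg_one_pow]
      ring
    have ho : ∀ e ∈ (Finset.range (r + 2)).filter (fun e => ¬(e % 2 = 0)),
        (-1 : ℤ) ^ e * ((r + 1).choose e : ℤ) = -((r + 1).choose e : ℤ) := by
      intro e he'
      simp only [Finset.mem_filter] at he'
      rw [(Nat.odd_iff.mpr (by omega)).neg_one_pow]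
      ring
    rw [Finset.sum_congr rfl he, Finset.sum_congr rfl ho, Finset.sum_neg_distrib]
    ring
  rcases Nat.even_or_odd p with hp | hp
  · have hp2 : p % 2 = 0 := Nat.even_iff.mp hp
    rw [hp2]
    have : (2 : ℤ) * ∑ e ∈ (Finset.range (r + 2)).filter (fun e => e % 2 = 0),
        ((r + 1).choose e : ℤ) = 2 * 2 ^ r := by
      rw [show (2 : ℤ) * 2 ^ r = 2 ^ (r + 1) by ring]
      linarith [htot, halt]
    linarith [this]
  · have hp2 : p % 2 = 1 := Nat.odd_iff.mp hp
    rw [hp2]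
    have hconv : (Finset.range (r + 2)).filter (fun e => e % 2 = 1)
        = (Finset.range (r + 2)).filter (fun e => ¬(e % 2 = 0)) := by
      apply Finset.filter_congr
      intro e _
      constructor <;> omega
    rw [hconv]
    have : (2 : ℤ) * ∑ e ∈ (Finset.range (r + 2)).filter (fun e => ¬(e % 2 = 0)),
        ((r + 1).choose e : ℤ) = 2 * 2 ^ r := by
      rw [show (2 : ℤ) * 2 ^ r = 2 ^ (r + 1) by ring]
      linarith [htot, halt]
    linarith [this]

/-- The coefficients in the halving identity sum to at most `2 ^ r`. -/
lemma sum_c_le (r K k : ℕ) : ∑ m ∈ Finset.range k, c (r + 1) K m ≤ (2 : ℤ) ^ r := by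
  have h1 : ∑ m ∈ Finset.range k, c (r + 1) K m
      = ∑ m ∈ (Finset.range k).filter (fun m => 2 * m + 1 ≤ K),
          ((r + 1).choose (K - (2 * m + 1)) : ℤ) := by
    rw [Finset.sum_filter]
    rfl
  rw [h1]
  set T := (Finset.range k).filter (fun m => 2 * m + 1 ≤ K) with hT
  have hinj : ∀ x ∈ T, ∀ y ∈ T, K - (2 * x + 1) = K - (2 * y + 1) → x = y := by
    intro x hx y hy hxy
    simp only [hT, Finset.mem_filter] at hx hy
    omega
  have h2 : ∑ m ∈ T, ((r + 1).choose (K - (2 * m + 1)) : ℤ)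
      = ∑ e ∈ T.image (fun m => K - (2 * m + 1)), ((r + 1).choose e : ℤ) :=
    (Finset.sum_image (f := fun e => ((r + 1).choose e : ℤ)) hinj).symm
  rw [h2]
  set I := T.image (fun m => K - (2 * m + 1)) with hI
  -- split off the part with large e (choose vanishes)
  have h3 : ∑ e ∈ I, ((r + 1).choose e : ℤ)
      = ∑ e ∈ I.filter (fun e => e < r + 2), ((r + 1).choose e : ℤ) := by
    rw [Finset.sum_filter]
    refine Finset.sum_congr rfl fun e _ => ?_
    by_cases h : e < r + 2
    · rw [if_pos h]
    · rw [if_neg h, Nat.choose_eq_zero_of_lt (by omega)]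
      norm_num
  rw [h3]
  have h4 : I.filter (fun e => e < r + 2)
      ⊆ (Finset.range (r + 2)).filter (fun e => e % 2 = (K + 1) % 2) := by
    intro e he
    simp only [hI, hT, Finset.mem_filter, Finset.mem_image, Finset.mem_range] at he ⊢
    obtain ⟨⟨m, ⟨_, hm2⟩, hme⟩, he2⟩ := he
    constructor
    · omega
    · omega
  calc ∑ e ∈ I.filter (fun e => e < r + 2), ((r + 1).choose e : ℤ)
      ≤ ∑ e ∈ (Finset.range (r + 2)).filter (fun e => e % 2 = (K + 1) % 2),
          ((r + 1).choose e : ℤ) := by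
        apply Finset.sum_le_sum_of_subset_of_nonneg h4
        intro i _ _
        positivity
    _ = 2 ^ r := choose_parity_sum r (K + 1)

lemma exp_id (r : ℕ) : r + r * (r - 1) / 2 = (r + 1) * r / 2 := by
  rcases r with _ | s
  · rfl
  · have hA : 2 ∣ (s + 1) * s := by
      rw [Nat.mul_comm]
      exact (Nat.even_mul_succ_self s).two_dvd
    have hB : (s + 1 + 1) * (s + 1) = (s + 1) * s + 2 * (s + 1) := by ring
    simp only [Nat.add_sub_cancel]
    omega

/-- Strengthened bounds: for `k ≤ 2^(r+1) + r`,
`0 ≤ -f (r+1) k ≤ 2^(r(r-1)/2)`. -/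
lemma f_bounds : ∀ r, ∀ k, k ≤ 2 ^ (r + 1) + r →
    0 ≤ -f (r + 1) k ∧ -f (r + 1) k ≤ 2 ^ (r * (r - 1) / 2) := by
  intro r
  induction r with
  | zero =>
      intro k hk
      interval_cases k
      · norm_num
      · have : f 1 1 = u 0 := by
          rw [f_succ_def]
          simp
        rw [this]
        norm_num [u]
      · have : f 1 2 = u 0 + u 1 := by
          rw [f_succ_def, Finset.sum_range_succ, Finset.sum_range_succ]
          simp
        rw [this]
        norm_num [u]
  | succ r ih =>
      intro k hk
      have hpow : 2 ^ (r + 1 + 1) = 2 * 2 ^ (r + 1) := by rw [pow_succ]; ring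
      rw [f_eq_phi (r + 1) k]
      have hneg : -∑ m ∈ Finset.range k, c (r + 1) (k + (r + 1)) m * f (r + 1) m
          = ∑ m ∈ Finset.range k, c (r + 1) (k + (r + 1)) m * (-f (r + 1) m) := by
        rw [← Finset.sum_neg_distrib]
        refine Finset.sum_congr rfl fun m _ => ?_
        ring
      rw [hneg]
      have key : ∀ m ∈ Finset.range k,
          0 ≤ c (r + 1) (k + (r + 1)) m * (-f (r + 1) m)
          ∧ c (r + 1) (k + (r + 1)) m * (-f (r + 1) m)
            ≤ c (r + 1) (k + (r + 1)) m * 2 ^ (r * (r - 1) / 2) := by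
        intro m _
        by_cases h : 2 * m + 1 ≤ k + (r + 1)
        · have hm : m ≤ 2 ^ (r + 1) + r := by omega
          obtain ⟨hb1, hb2⟩ := ih m hm
          have hc := c_nonneg (r + 1) (k + (r + 1)) m
          exact ⟨mul_nonneg hc hb1, mul_le_mul_of_nonneg_left hb2 hc⟩
        · have : c (r + 1) (k + (r + 1)) m = 0 := by unfold c; rw [if_neg h]
          rw [this]
          norm_num
      constructor
      · exact Finset.sum_nonneg fun m hm => (key m hm).1
      · calc ∑ m ∈ Finset.range k, c (r + 1) (k + (r + 1)) m * (-f (r + 1) m)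
            ≤ ∑ m ∈ Finset.range k,
                c (r + 1) (k + (r + 1)) m * 2 ^ (r * (r - 1) / 2) :=
              Finset.sum_le_sum fun m hm => (key m hm).2
          _ = (∑ m ∈ Finset.range k, c (r + 1) (k + (r + 1)) m)
                * 2 ^ (r * (r - 1) / 2) := by rw [Finset.sum_mul]
          _ ≤ 2 ^ r * 2 ^ (r * (r - 1) / 2) := by
              apply mul_le_mul_of_nonneg_right (sum_c_le r (k + (r + 1)) k)
              positivity
          _ = 2 ^ ((r + 1) * ((r + 1) - 1) / 2) := by
              rw [← pow_add]
              congr 1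
              simp only [Nat.add_sub_cancel]
              exact exp_id r

theorem sig_bounds (n : ℕ) (hn : 1 ≤ n) (l : ℕ) (hl : l ≤ 2 ^ n - 1) :
    0 ≤ -Sig l n ∧ -Sig l n ≤ 2 ^ ((n - 1) * (n - 2) / 2) := by
  obtain ⟨r, rfl⟩ : ∃ r, n = r + 1 := ⟨n - 1, by omega⟩
  have hl' : l ≤ 2 ^ (r + 1) + r := by
    have : 1 ≤ 2 ^ (r + 1) := Nat.one_le_two_pow
    omega
  have := f_bounds r l hl'
  rw [Sig_eq_f]
  have he1 : r + 1 - 1 = r := by omega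
  have he2 : r + 1 - 2 = r - 1 := by omega
  rw [he1, he2]
  exact this
end
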